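/- (Powers–Størmer inequality.) Let A and B be positive semidefinite d×d complex matrices. Then ‖A − B‖_F² ≤ ‖A² − B²‖₁, i.e., Tr((A − B)²) ≤ Σ_{j=1}^d |μ_j|, where μ_1, …, μ_d are the eigenvalues (with multiplicity) of the Hermitian matrix A² − B². -/

import Mathlib

open scoped ComplexOrder

open Matrix

lemma psd_diag_re_nonneg {d : ℕ} {M : Matrix (Fin d) (Fin d) ℂ} (hM : M.PosSemidef) (i : Fin d) :
    0 ≤ (M i i).re := by
  have := hM.re_dotProduct_nonneg (Pi.single i 1)
  simpa [dotProduct, mulVec, Pi.single_apply] using this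

lemma trace_diagonal_mul' {d : ℕ} (f : Fin d → ℂ) (G : Matrix (Fin d) (Fin d) ℂ) :
    Matrix.trace (Matrix.diagonal f * G) = ∑ i, f i * G i i := by
  simp [Matrix.trace, Matrix.diag, Matrix.mul_apply, Matrix.diagonal_apply,
    Finset.sum_ite_eq, Finset.mem_univ]

lemma rc_ofReal_eq (x : ℝ) : (RCLike.ofReal x : ℂ) = (x : ℂ) := rfl

lemma sandwich_mul {d : ℕ} (U : Matrix (Fin d) (Fin d) ℂ) (hU1 : star U * U = 1)
    (X Y : Matrix (Fin d) (Fin d) ℂ) :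
    (U * X * star U) * (U * Y * star U) = U * (X * Y) * star U := by
  have h : U * X * star U * (U * Y * star U) = U * X * (star U * U) * Y * star U := by
    simp only [mul_assoc]
  rw [h, hU1, mul_one]; simp only [mul_assoc]

lemma trace_conj_mul {d : ℕ} (S V D : Matrix (Fin d) (Fin d) ℂ) :
    Matrix.trace (S * (V * D * star V)) = Matrix.trace (D * (star V * S * V)) := by
  rw [Matrix.trace_mul_comm S (V * D * star V)]
  have h1 : V * D * star V * S = V * (D * (star V * S)) := by simp only [mul_assoc]
  rw [h1, Matrix.trace_mul_comm V (D * (star V * S))]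
  simp only [mul_assoc]

/-- Powers–Størmer inequality: for positive semidefinite matrices `A` and `B`,
`‖A − B‖_F² ≤ ‖A² − B²‖₁`. -/
theorem stmt8 (d : ℕ) (hd : 1 ≤ d) (A B : Matrix (Fin d) (Fin d) ℂ)
    (hA : A.PosSemidef) (hB : B.PosSemidef)
    (hM : (A * A - B * B).IsHermitian) :
    (Matrix.trace ((A - B) * (A - B))).re ≤ ∑ j, |hM.eigenvalues j| := by
  classical
  have hC : (A - B).IsHermitian := hA.isHermitian.sub hB.isHermitian
  set C := A - B with hCdef
  set M := A * A - B * B with hMdef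
  set c : Fin d → ℝ := hC.eigenvalues with hc
  set μ : Fin d → ℝ := hM.eigenvalues with hμ
  set U : Matrix (Fin d) (Fin d) ℂ := ↑(hC.eigenvectorUnitary) with hUdef
  set V : Matrix (Fin d) (Fin d) ℂ := ↑(hM.eigenvectorUnitary) with hVdef
  have hU1 : star U * U = 1 := hC.eigenvectorUnitary.2.1
  have hU2 : U * star U = 1 := Matrix.mem_unitaryGroup_iff.mp hC.eigenvectorUnitary.2
  have hV1 : star V * V = 1 := hM.eigenvectorUnitary.2.1
  -- spectral theorems
  have hsp : C = U * Matrix.diagonal (RCLike.ofReal ∘ c) * star U := hC.spectral_theorem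
  have hspM : M = V * Matrix.diagonal (RCLike.ofReal ∘ μ) * star V := hM.spectral_theorem
  -- sign function
  set s : Fin d → ℝ := fun i => if 0 ≤ c i then 1 else -1 with hs
  have hs_abs : ∀ i, |s i| = 1 := by
    intro i; by_cases h : 0 ≤ c i <;> simp [hs, h]
  have hsc : ∀ i, (s i : ℂ) * RCLike.ofReal (c i) = ((|c i| : ℝ) : ℂ) := by
    intro i
    rw [rc_ofReal_eq]
    by_cases h : 0 ≤ c i
    · simp only [hs]
      rw [if_pos h, abs_of_nonneg h]
      push_cast; ring
    · push_neg at h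
      simp only [hs]
      rw [if_neg (not_le.mpr h), abs_of_neg h]
      push_cast; ring
  set ds : Matrix (Fin d) (Fin d) ℂ := Matrix.diagonal (fun i => (s i : ℂ)) with hds
  set dc : Matrix (Fin d) (Fin d) ℂ := Matrix.diagonal (RCLike.ofReal ∘ c) with hdc
  set dE : Matrix (Fin d) (Fin d) ℂ := Matrix.diagonal (fun i => ((|c i| : ℝ) : ℂ)) with hdE
  have hdsdc : ds * dc = dE := by
    rw [hds, hdc, hdE, Matrix.diagonal_mul_diagonal]
    exact congrArg Matrix.diagonal (funext fun i => hsc i)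
  have hdcds : dc * ds = dE := by
    rw [hds, hdc, hdE, Matrix.diagonal_mul_diagonal]
    refine congrArg Matrix.diagonal (funext fun i => ?_)
    rw [mul_comm]; exact hsc i
  set S : Matrix (Fin d) (Fin d) ℂ := U * ds * star U with hS
  set E : Matrix (Fin d) (Fin d) ℂ := U * dE * star U with hE
  have hSC : S * C = E := by rw [hS, hE, hsp, sandwich_mul U hU1, hdsdc]
  have hCS : C * S = E := by rw [hS, hE, hsp, sandwich_mul U hU1, hdcds]
  -- trace (C*C) = ∑ (c i)^2
  have t1 : (Matrix.trace (C * C)).re = ∑ i, (c i) ^ 2 := by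
    rw [hsp, sandwich_mul U hU1]
    rw [Matrix.trace_mul_comm, ← mul_assoc, hU1, one_mul]
    rw [hdc, Matrix.diagonal_mul_diagonal, Matrix.trace_diagonal]
    rw [Complex.re_sum]
    congr 1; funext i
    simp [Function.comp, rc_ofReal_eq, ← Complex.ofReal_mul, sq]
  -- 2 M = C (A+B) + (A+B) C
  have h2M : C * (A + B) + (A + B) * C = M + M := by
    rw [hCdef, hMdef]; noncomm_ring
  -- trace (S*M) = trace (E * (A+B))
  have t4 : Matrix.trace (S * M) = Matrix.trace (E * (A + B)) := by
    have e1 : Matrix.trace (S * (C * (A + B))) = Matrix.trace (E * (A + B)) := by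
      rw [← mul_assoc, hSC]
    have e2 : Matrix.trace (S * ((A + B) * C)) = Matrix.trace (E * (A + B)) := by
      rw [← mul_assoc, Matrix.trace_mul_comm (S * (A + B)) C, ← mul_assoc, hCS,
        Matrix.trace_mul_comm]
    have e3 : Matrix.trace (S * M) + Matrix.trace (S * M)
        = Matrix.trace (E * (A + B)) + Matrix.trace (E * (A + B)) := by
      calc Matrix.trace (S * M) + Matrix.trace (S * M)
          = Matrix.trace (S * (C * (A + B))) + Matrix.trace (S * ((A + B) * C)) := by
            rw [← Matrix.trace_add, ← Matrix.trace_add, ← mul_add, ← mul_add, h2M]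
        _ = _ := by rw [e1, e2]
    linear_combination e3 / 2
  -- trace (E * (A+B)) = ∑ |c i| * G i i
  set G : Matrix (Fin d) (Fin d) ℂ := star U * (A + B) * U with hG
  have t5 : Matrix.trace (E * (A + B)) = ∑ i, ((|c i| : ℝ) : ℂ) * G i i := by
    rw [Matrix.trace_mul_comm, hE, trace_conj_mul, hdE, trace_diagonal_mul', hG]
  -- PSD parts
  set GA : Matrix (Fin d) (Fin d) ℂ := star U * A * U with hGA
  set GB : Matrix (Fin d) (Fin d) ℂ := star U * B * U with hGB
  have hGsum : G = GA + GB := by rw [hG, hGA, hGB, mul_add, add_mul]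
  have hGApsd : GA.PosSemidef := by
    rw [hGA, Matrix.star_eq_conjTranspose]
    exact hA.conjTranspose_mul_mul_same U
  have hGBpsd : GB.PosSemidef := by
    rw [hGB, Matrix.star_eq_conjTranspose]
    exact hB.conjTranspose_mul_mul_same U
  have hdiff : GA - GB = dc := by
    have h := hC.conjStarAlgAut_star_eigenvectorUnitary
    rw [Unitary.conjStarAlgAut_star_apply] at h
    rw [hGA, hGB, ← sub_mul, ← mul_sub, ← hCdef]
    exact h
  have keyi : ∀ i, |c i| ≤ (G i i).re := by
    intro i
    have ha : 0 ≤ (GA i i).re := psd_diag_re_nonneg hGApsd i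
    have hb : 0 ≤ (GB i i).re := psd_diag_re_nonneg hGBpsd i
    have hab : (GA i i).re - (GB i i).re = c i := by
      have h := congrFun (congrFun hdiff i) i
      have h2 := congrArg Complex.re h
      simpa [hdc, Matrix.sub_apply, Matrix.diagonal_apply_eq, Complex.sub_re,
        Function.comp, rc_ofReal_eq] using h2
    have hG2 : (G i i).re = (GA i i).re + (GB i i).re := by
      rw [hGsum]; simp [Matrix.add_apply]
    rw [hG2, ← hab]
    exact abs_le.mpr ⟨by linarith, by linarith⟩
  -- lower bound
  have lower : (Matrix.trace (C * C)).re ≤ (Matrix.trace (S * M)).re := by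
    rw [t1, t4, t5, Complex.re_sum]
    apply Finset.sum_le_sum
    intro i _
    rw [Complex.re_ofReal_mul]
    calc c i ^ 2 = |c i| * |c i| := by rw [← sq_abs, sq]
      _ ≤ |c i| * (G i i).re := mul_le_mul_of_nonneg_left (keyi i) (abs_nonneg _)
  -- upper bound
  set W : Matrix (Fin d) (Fin d) ℂ := star U * V with hW
  have hWstar : star W = star V * U := by rw [hW, Matrix.star_mul, star_star]
  have hWunit : star W * W = 1 := by
    rw [hWstar, hW]
    calc star V * U * (star U * V) = star V * (U * star U * V) := by simp only [mul_assoc]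
      _ = 1 := by rw [hU2, one_mul, hV1]
  set T : Matrix (Fin d) (Fin d) ℂ := star V * S * V with hT
  have t8 : Matrix.trace (S * M) = ∑ j, (RCLike.ofReal (μ j) : ℂ) * T j j := by
    rw [hspM, trace_conj_mul, trace_diagonal_mul']
    rfl
  have hTW : T = star W * (ds * W) := by
    rw [hT, hWstar, hW, hS]
    simp only [mul_assoc]
  have hTjj : ∀ j, (T j j).re = ∑ i, s i * Complex.normSq (W i j) := by
    intro j
    rw [hTW, Matrix.mul_apply, Complex.re_sum]
    congr 1; funext i
    rw [Matrix.star_apply, Matrix.diagonal_mul, Complex.star_def, mul_left_comm,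
      ← Complex.normSq_eq_conj_mul_self, Complex.re_ofReal_mul, Complex.ofReal_re]
  have hWcol : ∀ j, ∑ i, Complex.normSq (W i j) = 1 := by
    intro j
    have h := congrFun (congrFun hWunit j) j
    rw [Matrix.mul_apply] at h
    have h2 := congrArg Complex.re h
    rw [Complex.re_sum] at h2
    simpa [Matrix.star_apply, Complex.star_def, ← Complex.normSq_eq_conj_mul_self,
      Matrix.one_apply_eq, Complex.ofReal_re] using h2
  have hTle : ∀ j, |(T j j).re| ≤ 1 := by
    intro j
    rw [hTjj j]
    calc |∑ i, s i * Complex.normSq (W i j)| ≤ ∑ i, |s i * Complex.normSq (W i j)| :=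
        Finset.abs_sum_le_sum_abs _ _
      _ = ∑ i, Complex.normSq (W i j) := by
        refine Finset.sum_congr rfl fun i _ => ?_
        rw [abs_mul, hs_abs, one_mul, abs_of_nonneg (Complex.normSq_nonneg _)]
      _ = 1 := hWcol j
  have upper : (Matrix.trace (S * M)).re ≤ ∑ j, |μ j| := by
    rw [t8, Complex.re_sum]
    apply Finset.sum_le_sum
    intro j _
    rw [rc_ofReal_eq, Complex.re_ofReal_mul]
    calc μ j * (T j j).re ≤ |μ j * (T j j).re| := le_abs_self _
      _ = |μ j| * |(T j j).re| := abs_mul _ _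
      _ ≤ |μ j| * 1 := mul_le_mul_of_nonneg_left (hTle j) (abs_nonneg _)
      _ = |μ j| := mul_one _
  exact lower.trans upper
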